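/- For λ ∈ ℂ with λ ≠ 0 and 27 + 58λ + 8λ² ≠ 0, define a(λ) = (27 + 87λ + 16λ²)/(λ·(27 + 58λ + 8λ²)) and b(λ) = (−3 + 16λ + 6λ²)/(4·λ²·(27 + 58λ + 8λ²)). Then for all such λ, 4·b(λ) − a(λ)² − 2·a'(λ) = (648 + 1824λ + 3157λ² + 476λ³ + 48λ⁴)/(λ²·(27 + 58λ + 8λ²)²). -/

import Mathlib

/-- Coefficient `a` of the degree-2 Picard-Fuchs equation computed for the family
of twists No. 10 (base elliptic surface with singular fibers I₁, I₂, I₅, IV at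
`-27/4, -1/2, ∞, 0`). -/
noncomputable def aTwist10 (lam : ℂ) : ℂ :=
  (27 + 87 * lam + 16 * lam ^ 2) / (lam * (27 + 58 * lam + 8 * lam ^ 2))

/-- Coefficient `b` of the degree-2 Picard-Fuchs equation for the family of twists
No. 10. -/
noncomputable def bTwist10 (lam : ℂ) : ℂ :=
  (-3 + 16 * lam + 6 * lam ^ 2) / (4 * lam ^ 2 * (27 + 58 * lam + 8 * lam ^ 2))

/-- The sigma invariant `4b - a² - 2a'` of the degree-2 Picard-Fuchs equation of the
family of twists No. 10. -/
theorem sigma_twist_no10 (lam : ℂ) (h0 : lam ≠ 0)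
    (h1 : 27 + 58 * lam + 8 * lam ^ 2 ≠ 0) :
    4 * bTwist10 lam - (aTwist10 lam) ^ 2 - 2 * deriv aTwist10 lam
      = (648 + 1824 * lam + 3157 * lam ^ 2 + 476 * lam ^ 3 + 48 * lam ^ 4)
        / (lam ^ 2 * (27 + 58 * lam + 8 * lam ^ 2) ^ 2) := by
  have hD : lam * (27 + 58 * lam + 8 * lam ^ 2) ≠ 0 := mul_ne_zero h0 h1
  have hN : HasDerivAt (fun x : ℂ => 27 + 87 * x + 16 * x ^ 2) (87 + 32 * lam) lam := by
    have h := (((hasDerivAt_id lam).const_mul (87 : ℂ)).const_add 27).add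
      ((hasDerivAt_pow 2 lam).const_mul (16 : ℂ))
    exact h.congr_deriv (by ring)
  have hDen : HasDerivAt (fun x : ℂ => x * (27 + 58 * x + 8 * x ^ 2))
      (27 + 116 * lam + 24 * lam ^ 2) lam := by
    have h := (hasDerivAt_id lam).mul
      (((hasDerivAt_id lam).const_mul (58 : ℂ)).const_add 27 |>.add
        ((hasDerivAt_pow 2 lam).const_mul (8 : ℂ)))
    simp only [id_eq] at h
    exact h.congr_deriv (by simp only [Pi.add_apply]; ring)
  have hA : HasDerivAt aTwist10
      (((87 + 32 * lam) * (lam * (27 + 58 * lam + 8 * lam ^ 2))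
        - (27 + 87 * lam + 16 * lam ^ 2) * (27 + 116 * lam + 24 * lam ^ 2))
        / (lam * (27 + 58 * lam + 8 * lam ^ 2)) ^ 2) lam := hN.div hDen hD
  have hD2 : (lam * (27 + 58 * lam + 8 * lam ^ 2)) ^ 2 ≠ 0 := pow_ne_zero 2 hD
  have h4 : (4 : ℂ) * lam ^ 2 * (27 + 58 * lam + 8 * lam ^ 2) ≠ 0 :=
    mul_ne_zero (mul_ne_zero (by norm_num : (4:ℂ) ≠ 0) (pow_ne_zero 2 h0)) h1
  have hR : lam ^ 2 * (27 + 58 * lam + 8 * lam ^ 2) ^ 2 ≠ 0 :=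
    mul_ne_zero (pow_ne_zero 2 h0) (pow_ne_zero 2 h1)
  have eb : 4 * bTwist10 lam
      = ((-3 + 16 * lam + 6 * lam ^ 2) * (27 + 58 * lam + 8 * lam ^ 2))
        / (lam * (27 + 58 * lam + 8 * lam ^ 2)) ^ 2 := by
    unfold bTwist10
    rw [mul_div_assoc', div_eq_div_iff h4 hD2]
    ring
  have ea : (aTwist10 lam) ^ 2
      = (27 + 87 * lam + 16 * lam ^ 2) ^ 2 / (lam * (27 + 58 * lam + 8 * lam ^ 2)) ^ 2 := by
    unfold aTwist10
    rw [div_pow]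
  have ea' : 2 * deriv aTwist10 lam
      = (2 * ((87 + 32 * lam) * (lam * (27 + 58 * lam + 8 * lam ^ 2))
          - (27 + 87 * lam + 16 * lam ^ 2) * (27 + 116 * lam + 24 * lam ^ 2)))
        / (lam * (27 + 58 * lam + 8 * lam ^ 2)) ^ 2 := by
    rw [hA.deriv, mul_div_assoc']
  rw [eb, ea, ea', div_sub_div_same, div_sub_div_same, div_eq_div_iff hD2 hR]
  ring
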